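/- Let s ≥ 1 and suppose the identity sequence id(k) = k belongs to D(A^s) and that (A^s id)(l) = β₀ + β₁ l for all l ∈ ℕ, where β₀, β₁ ∈ ℝ. Then β₁ > 0 and β₀ > 0. -/
import Mathlib


open scoped BigOperators

noncomputable section

/-- Tail sum `q_l = Σ_{k ≥ l} p_k`. -/
def qtail (p : ℕ → ℝ) (l : ℕ) : ℝ := ∑' k, p (l + k)

/-- The operator `A` on real sequences: `(A v)(l) = (1/q_l) Σ_{k=l}^∞ p_k v(k)`. -/
def opAR (p : ℕ → ℝ) (v : ℕ → ℝ) : ℕ → ℝ :=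
  fun l => (1 / qtail p l) * ∑' k, p (l + k) * v (l + k)

/-- Membership in the domain `D(A) = {v : Σ_k p_k |v(k)| < ∞}` (real sequences). -/
def memDAR (p : ℕ → ℝ) (v : ℕ → ℝ) : Prop :=
  Summable fun k => p k * |v k|

/-- Membership in the domain `D(A^m) = {v : A^k v ∈ D(A) for k = 0,…,m-1}`. -/
def memDAiterR (p : ℕ → ℝ) (m : ℕ) (v : ℕ → ℝ) : Prop :=
  ∀ k < m, memDAR p ((opAR p)^[k] v)

lemma shift_summable' {p : ℕ → ℝ} (hp : Summable p) (l : ℕ) :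
    Summable fun k => p (l + k) :=
  hp.comp_injective (add_right_injective l)

lemma qtail_pos' {p : ℕ → ℝ} (hp : ∀ k, 0 < p k) (hsum : Summable p) (l : ℕ) :
    0 < qtail p l :=
  Summable.tsum_pos (shift_summable' hsum l) (fun k => (hp _).le) 0 (hp _)

lemma core_lt {p : ℕ → ℝ} (hp : ∀ k, 0 < p k) (hsum : Summable p)
    {w : ℕ → ℝ} (hw : memDAR p w) (hge : ∀ k : ℕ, (k : ℝ) ≤ w k) (l : ℕ) :
    (l : ℝ) < opAR p w l := by
  have hq := qtail_pos' hp hsum l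
  have hsw : Summable fun k => p (l + k) * w (l + k) := by
    have h1 : Summable fun k => p (l + k) * |w (l + k)| :=
      hw.comp_injective (add_right_injective l)
    exact (h1.congr fun k => by
      rw [abs_mul, abs_of_pos (hp _)]).of_abs
  have hle : ∀ k : ℕ, (l : ℝ) * p (l + k) ≤ p (l + k) * w (l + k) := by
    intro k
    rw [mul_comm]
    refine mul_le_mul_of_nonneg_left (le_trans ?_ (hge (l + k))) (hp _).le
    exact_mod_cast Nat.le_add_right l k
  have hstrict : (l : ℝ) * p (l + 1) < p (l + 1) * w (l + 1) := by
    rw [mul_comm]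
    refine mul_lt_mul_of_pos_left (lt_of_lt_of_le ?_ (hge (l + 1))) (hp _)
    exact_mod_cast Nat.lt_succ_self l
  have key : (l : ℝ) * qtail p l < ∑' k, p (l + k) * w (l + k) := by
    calc (l : ℝ) * qtail p l = ∑' k, (l : ℝ) * p (l + k) := (tsum_mul_left).symm
    _ < _ := Summable.tsum_lt_tsum hle hstrict
        (Summable.mul_left _ (shift_summable' hsum l)) hsw
  have hrw : (l : ℝ) = (1 / qtail p l) * ((l : ℝ) * qtail p l) := by
    field_simp
  rw [opAR, hrw]
  exact mul_lt_mul_of_pos_left key (by positivity)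

/-- If `A^s id` is the affine function `l ↦ β₀ + β₁ l`, then `β₁ > 0` and `β₀ > 0`. -/
theorem regression_coefficients_positive
    (p : ℕ → ℝ) (hp : ∀ k, 0 < p k) (hsum : HasSum p 1)
    (s : ℕ) (hs : 1 ≤ s) (β₀ β₁ : ℝ)
    (hid : memDAiterR p s (fun k => (k : ℝ)))
    (hlin : ∀ l : ℕ, ((opAR p)^[s] (fun k => (k : ℝ))) l = β₀ + β₁ * l) :
    0 < β₁ ∧ 0 < β₀ := by
  have hsum' := hsum.summable
  have hge : ∀ m, m ≤ s → ∀ l : ℕ,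
      (l : ℝ) ≤ ((opAR p)^[m] (fun k => (k : ℝ))) l := by
    intro m
    induction m with
    | zero => intro _ l; simp
    | succ n ih =>
      intro hns l
      have hn : n < s := hns
      rw [Function.iterate_succ_apply']
      exact (core_lt hp hsum' (hid n hn) (ih hn.le) l).le
  obtain ⟨t, rfl⟩ : ∃ t, s = t + 1 := ⟨s - 1, (Nat.succ_pred_eq_of_pos hs).symm⟩
  have hstrict : ∀ l : ℕ, (l : ℝ) < ((opAR p)^[t + 1] (fun k => (k : ℝ))) l := by
    intro l
    rw [Function.iterate_succ_apply']
    exact core_lt hp hsum' (hid t (Nat.lt_succ_self t)) (hge t (Nat.le_succ t)) l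
  constructor
  · by_contra h
    push_neg at h
    obtain ⟨n, hn⟩ := exists_nat_gt β₀
    have h1 := hstrict n
    rw [hlin n] at h1
    have h2 : β₁ * (n : ℝ) ≤ 0 :=
      mul_nonpos_of_nonpos_of_nonneg h (Nat.cast_nonneg n)
    linarith
  · have h0 := hstrict 0
    rw [hlin 0] at h0
    simpa using h0
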